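/- Weak duality between problem (PHC) and its dual (PHC*) (inequality (15)). Let (x, v) be a feasible solution of order k. Let (x*, w) be an adjoint arc of order k, let v* : [0,T] → ℝⁿ be any function, let μ* = (μ₀*, μ₁*) ∈ ℝⁿ × ℝⁿ, let m, ω : [0,T] → ℝ be Lebesgue integrable, and let c_f, c_S and c_S^0, …, c_S^{k−2} be real numbers such that: (i) for a.e. t ∈ [0,T], m(t) ≤ ⟨ξ, (−1)^k w(t) − v*(t)⟩ − ⟨η, x*(t)⟩ for all ξ ∈ ℝⁿ and all η ∈ F(ξ, t); (ii) for a.e. t ∈ [0,T], ω(t) ≥ ⟨ξ, −v*(t)⟩ for all ξ ∈ X(t); (iii) c_f ≥ ⟨y₀, (−1)^{k−1} x*^{(k−1)}(0) + μ₀*⟩ + ⟨y₁, μ₁* + (−1)^k x*^{(k−1)}(T)⟩ − f(y₀, y₁) for all y₀, y₁ ∈ ℝⁿ; (iv) c_S ≥ −⟨s₀, μ₀*⟩ − ⟨s₁, μ₁*⟩ for all (s₀, s₁) ∈ S; (v) for each j = 0,…,k−2, c_S^j ≥ ⟨s₀, (−1)^j x*^{(j)}(0)⟩ + ⟨s₁,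 (−1)^{j+1} x*^{(j)}(T)⟩ for all (s₀, s₁) ∈ S. Then f(x(0), x(T)) ≥ −c_f + ∫₀ᵀ m(t)dt − ∫₀ᵀ ω(t)dt − c_S − Σ_{j=0}^{k−2} c_S^j. -/

import Mathlib

open MeasureTheory Matrix Set

/-- A feasible solution of order `k` for the problem (PHC). -/
def IsFeasible (n k : ℕ) (T : ℝ)
    (F : (Fin n → ℝ) → ℝ → Set (Fin n → ℝ))
    (S : Set ((Fin n → ℝ) × (Fin n → ℝ)))
    (X : ℝ → Set (Fin n → ℝ))
    (x v : ℝ → (Fin n → ℝ)) : Prop :=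
  (∀ j < k - 1, Differentiable ℝ (iteratedDeriv j x)) ∧
  IntervalIntegrable v volume 0 T ∧
  (∀ t ∈ Icc (0:ℝ) T,
      iteratedDeriv (k-1) x t = iteratedDeriv (k-1) x 0 + ∫ s in (0:ℝ)..t, v s) ∧
  (∀ᵐ t ∂volume, t ∈ Icc (0:ℝ) T → v t ∈ F (x t) t) ∧
  (∀ j < k, (iteratedDeriv j x 0, iteratedDeriv j x T) ∈ S) ∧
  (∀ t ∈ Icc (0:ℝ) T, x t ∈ X t)

/-- An adjoint arc of order `k`. -/
def IsAdjointArc (n k : ℕ) (T : ℝ) (xs w : ℝ → (Fin n → ℝ)) : Prop :=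
  (∀ j < k - 1, Differentiable ℝ (iteratedDeriv j xs)) ∧
  IntervalIntegrable w volume 0 T ∧
  (∀ t ∈ Icc (0:ℝ) T,
      iteratedDeriv (k-1) xs t = iteratedDeriv (k-1) xs 0 + ∫ s in (0:ℝ)..t, w s)


lemma swap_core (T : ℝ) (p q : ℝ → ℝ)
    (hp : IntegrableOn p (Ioc 0 T)) (hq : IntegrableOn q (Ioc 0 T)) :
    (∫ t in Ioc (0:ℝ) T, q t * ∫ s in Ioc (0:ℝ) t, p s)
      = ∫ s in Ioc (0:ℝ) T, p s * ∫ t in Ioc s T, q t := by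
  set μ : Measure ℝ := volume.restrict (Ioc 0 T) with hμ
  have hbase : Integrable (fun z : ℝ × ℝ => q z.1 * p z.2) (μ.prod μ) :=
    hq.mul_prod hp
  have hmeas : MeasurableSet {z : ℝ × ℝ | z.2 ≤ z.1} :=
    measurableSet_le measurable_snd measurable_fst
  have hF : Integrable ({z : ℝ × ℝ | z.2 ≤ z.1}.indicator
      (fun z : ℝ × ℝ => q z.1 * p z.2)) (μ.prod μ) := hbase.indicator hmeas
  have hswap := MeasureTheory.integral_integral_swap (f := fun t s =>
      {z : ℝ × ℝ | z.2 ≤ z.1}.indicator (fun z : ℝ × ℝ => q z.1 * p z.2) (t, s))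
    (μ := μ) (ν := μ) (by exact hF)
  -- compute LHS of hswap
  have hL : (∫ t, (∫ s, {z : ℝ × ℝ | z.2 ≤ z.1}.indicator
      (fun z : ℝ × ℝ => q z.1 * p z.2) (t, s) ∂μ) ∂μ)
      = ∫ t in Ioc (0:ℝ) T, q t * ∫ s in Ioc (0:ℝ) t, p s := by
    rw [hμ]
    refine setIntegral_congr_fun measurableSet_Ioc (fun t ht => ?_)
    have : (fun s => {z : ℝ × ℝ | z.2 ≤ z.1}.indicator
        (fun z : ℝ × ℝ => q z.1 * p z.2) (t, s))
        = (Iic t).indicator (fun s => q t * p s) := by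
      ext s; simp [Set.indicator_apply]
    rw [this, integral_indicator measurableSet_Iic]
    rw [Measure.restrict_restrict measurableSet_Iic]
    have : Iic t ∩ Ioc 0 T = Ioc 0 t := by
      ext s; simp only [mem_inter_iff, mem_Iic, mem_Ioc]
      constructor
      · rintro ⟨h1, h2, h3⟩; exact ⟨h2, h1⟩
      · rintro ⟨h1, h2⟩; exact ⟨h2, h1, h2.trans ht.2⟩
    rw [this, integral_const_mul]
  have hR : (∫ s, (∫ t, {z : ℝ × ℝ | z.2 ≤ z.1}.indicator
      (fun z : ℝ × ℝ => q z.1 * p z.2) (t, s) ∂μ) ∂μ)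
      = ∫ s in Ioc (0:ℝ) T, p s * ∫ t in Ioc s T, q t := by
    rw [hμ]
    refine setIntegral_congr_fun measurableSet_Ioc (fun s hs => ?_)
    have : (fun t => {z : ℝ × ℝ | z.2 ≤ z.1}.indicator
        (fun z : ℝ × ℝ => q z.1 * p z.2) (t, s))
        = (Ici s).indicator (fun t => q t * p s) := by
      ext t; simp [Set.indicator_apply]
    rw [this, integral_indicator measurableSet_Ici]
    rw [Measure.restrict_restrict measurableSet_Ici]
    have h1 : Ici s ∩ Ioc 0 T = Icc s T := by
      ext t; simp only [mem_inter_iff, mem_Ici, mem_Ioc, mem_Icc]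
      constructor
      · rintro ⟨h1, _, h3⟩; exact ⟨h1, h3⟩
      · rintro ⟨h1, h2⟩; exact ⟨h1, hs.1.trans_le h1, h2⟩
    rw [h1, integral_Icc_eq_integral_Ioc, integral_mul_const, mul_comm]
  rw [hL, hR] at hswap
  exact hswap

lemma parts_scalar (T : ℝ) (hT : 0 ≤ T) (a b p q : ℝ → ℝ)
    (hp : IntervalIntegrable p volume 0 T) (hq : IntervalIntegrable q volume 0 T)
    (ha : ∀ t ∈ Icc (0:ℝ) T, a t = a 0 + ∫ s in (0:ℝ)..t, p s)
    (hb : ∀ t ∈ Icc (0:ℝ) T, b t = b 0 + ∫ s in (0:ℝ)..t, q s) :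
    ∫ t in (0:ℝ)..T, (a t * q t + p t * b t) = a T * b T - a 0 * b 0 := by
  have huIcc : uIcc (0:ℝ) T = Icc 0 T := uIcc_of_le hT
  set A : ℝ → ℝ := fun t => ∫ s in (0:ℝ)..t, p s with hA
  set B : ℝ → ℝ := fun t => ∫ s in (0:ℝ)..t, q s with hB
  have hAc : ContinuousOn A (uIcc 0 T) :=
    intervalIntegral.continuousOn_primitive_interval' hp left_mem_uIcc
  have hBc : ContinuousOn B (uIcc 0 T) :=
    intervalIntegral.continuousOn_primitive_interval' hq left_mem_uIcc
  have hAq : IntervalIntegrable (fun t => A t * q t) volume 0 T := hq.continuousOn_mul hAc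
  have hpB : IntervalIntegrable (fun t => p t * B t) volume 0 T := hp.mul_continuousOn hBc
  have haq : IntervalIntegrable (fun t => a 0 * q t) volume 0 T := hq.const_mul _
  have hpb : IntervalIntegrable (fun t => p t * b 0) volume 0 T := hp.mul_const _
  -- replace a, b by their primitives
  have hcongr : ∫ t in (0:ℝ)..T, (a t * q t + p t * b t)
      = ∫ t in (0:ℝ)..T, ((a 0 * q t + A t * q t) + (p t * b 0 + p t * B t)) := by
    refine intervalIntegral.integral_congr (fun t ht => ?_)
    rw [huIcc] at ht
    rw [ha t ht, hb t ht]; ring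
  rw [hcongr]
  rw [intervalIntegral.integral_add (haq.add hAq) (hpb.add hpB),
    intervalIntegral.integral_add haq hAq, intervalIntegral.integral_add hpb hpB,
    intervalIntegral.integral_const_mul, intervalIntegral.integral_mul_const]
  -- the key cross-term identity
  have hkey : (∫ t in (0:ℝ)..T, A t * q t) + (∫ t in (0:ℝ)..T, p t * B t)
      = (∫ s in (0:ℝ)..T, p s) * (∫ s in (0:ℝ)..T, q s) := by
    have hp' : IntegrableOn p (Ioc 0 T) :=
      (intervalIntegrable_iff_integrableOn_Ioc_of_le hT).mp hp
    have hq' : IntegrableOn q (Ioc 0 T) :=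
      (intervalIntegrable_iff_integrableOn_Ioc_of_le hT).mp hq
    have hAq' : IntegrableOn (fun t => A t * q t) (Ioc 0 T) :=
      (intervalIntegrable_iff_integrableOn_Ioc_of_le hT).mp hAq
    have hpB' : IntegrableOn (fun t => p t * B t) (Ioc 0 T) :=
      (intervalIntegrable_iff_integrableOn_Ioc_of_le hT).mp hpB
    have e1 : (∫ t in (0:ℝ)..T, A t * q t) = ∫ t in Ioc (0:ℝ) T, q t * ∫ s in Ioc (0:ℝ) t, p s := by
      rw [intervalIntegral.integral_of_le hT]
      refine setIntegral_congr_fun measurableSet_Ioc (fun t ht => ?_)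
      rw [hA]; simp only
      rw [intervalIntegral.integral_of_le ht.1.le, mul_comm]
    have e2 : ∀ t ∈ Ioc (0:ℝ) T, B t = ∫ s in Ioc (0:ℝ) t, q s := by
      intro t ht
      rw [hB]; simp only
      rw [intervalIntegral.integral_of_le ht.1.le]
    have hsplit : ∀ s ∈ Ioc (0:ℝ) T,
        (∫ t in Ioc s T, q t) = (∫ t in Ioc (0:ℝ) T, q t) - B s := by
      intro s hs
      have hun : Ioc (0:ℝ) s ∪ Ioc s T = Ioc 0 T := Ioc_union_Ioc_eq_Ioc hs.1.le hs.2
      have hdisj : Disjoint (Ioc (0:ℝ) s) (Ioc s T) := Ioc_disjoint_Ioc_of_le le_rfl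
      rw [← hun, setIntegral_union hdisj measurableSet_Ioc
        (hq'.mono_set (by rw [← hun]; exact subset_union_left))
        (hq'.mono_set (by rw [← hun]; exact subset_union_right))]
      have : B s = ∫ t in Ioc (0:ℝ) s, q t := by
        rw [hB]; simp only; rw [intervalIntegral.integral_of_le hs.1.le]
      rw [this]; ring
    rw [e1, swap_core T p q hp' hq']
    have e3 : (∫ s in Ioc (0:ℝ) T, p s * ∫ t in Ioc s T, q t)
        = ∫ s in Ioc (0:ℝ) T, (p s * (∫ t in Ioc (0:ℝ) T, q t) - p s * B s) := by
      refine setIntegral_congr_fun measurableSet_Ioc (fun s hs => ?_)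
      rw [hsplit s hs]; ring
    rw [e3, integral_sub (hp'.mul_const _) hpB', integral_mul_const]
    simp only [intervalIntegral.integral_of_le hT]
    ring
  have haT := ha T (right_mem_Icc.mpr hT)
  have hbT := hb T (right_mem_Icc.mpr hT)
  rw [haT, hbT]
  rw [← hA, ← hB] at *
  nlinarith [hkey]

lemma pi_II_apply {n : ℕ} {f : ℝ → Fin n → ℝ} {T : ℝ}
    (hf : IntervalIntegrable f volume 0 T) (i : Fin n) :
    IntervalIntegrable (fun t => f t i) volume 0 T := by
  have h1 := (ContinuousLinearMap.proj (R := ℝ) (φ := fun _ : Fin n => ℝ) i).integrable_comp hf.1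
  have h2 := (ContinuousLinearMap.proj (R := ℝ) (φ := fun _ : Fin n => ℝ) i).integrable_comp hf.2
  exact ⟨by simpa [IntegrableOn] using h1, by simpa [IntegrableOn] using h2⟩

lemma pi_intervalIntegral_apply {n : ℕ} {f : ℝ → Fin n → ℝ} {T : ℝ}
    (hf : IntervalIntegrable f volume 0 T) (i : Fin n) :
    (∫ t in (0:ℝ)..T, f t) i = ∫ t in (0:ℝ)..T, f t i := by
  have := (ContinuousLinearMap.proj (R := ℝ) (φ := fun _ : Fin n => ℝ) i).intervalIntegral_comp_comm hf
  simpa using this.symm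

lemma II_dot {n : ℕ} {T : ℝ} (hT : 0 ≤ T) {A g : ℝ → Fin n → ℝ}
    (hA : ContinuousOn A (Icc 0 T)) (hg : IntervalIntegrable g volume 0 T) :
    IntervalIntegrable (fun t => A t ⬝ᵥ g t) volume 0 T := by
  have : (fun t => A t ⬝ᵥ g t) = ∑ i : Fin n, fun t => A t i * g t i := by
    ext t; simp [dotProduct]
  rw [this]
  refine IntervalIntegrable.sum (μ := volume) (a := 0) (b := T) Finset.univ
    (f := fun i t => A t i * g t i) (fun i _ => ?_)
  refine (pi_II_apply hg i).continuousOn_mul ?_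
  rw [uIcc_of_le hT]
  exact (continuous_apply i).comp_continuousOn hA

lemma II_dot' {n : ℕ} {T : ℝ} (hT : 0 ≤ T) {A g : ℝ → Fin n → ℝ}
    (hA : ContinuousOn A (Icc 0 T)) (hg : IntervalIntegrable g volume 0 T) :
    IntervalIntegrable (fun t => g t ⬝ᵥ A t) volume 0 T := by
  have : (fun t => g t ⬝ᵥ A t) = fun t => A t ⬝ᵥ g t := by
    ext t; exact dotProduct_comm _ _
  rw [this]; exact II_dot hT hA hg

lemma contOn_of_rep {n : ℕ} {T : ℝ} (hT : 0 ≤ T) {a p : ℝ → Fin n → ℝ}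
    (hp : IntervalIntegrable p volume 0 T)
    (ha : ∀ t ∈ Icc (0:ℝ) T, a t = a 0 + ∫ s in (0:ℝ)..t, p s) :
    ContinuousOn a (Icc 0 T) := by
  have h := (continuousOn_const (c := a 0)).add
    (intervalIntegral.continuousOn_primitive_interval' hp left_mem_uIcc)
  rw [uIcc_of_le hT] at h
  exact h.congr (fun t ht => ha t ht)

lemma parts_dot {n : ℕ} {T : ℝ} (hT : 0 ≤ T) (a b p q : ℝ → Fin n → ℝ)
    (hp : IntervalIntegrable p volume 0 T) (hq : IntervalIntegrable q volume 0 T)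
    (ha : ∀ t ∈ Icc (0:ℝ) T, a t = a 0 + ∫ s in (0:ℝ)..t, p s)
    (hb : ∀ t ∈ Icc (0:ℝ) T, b t = b 0 + ∫ s in (0:ℝ)..t, q s) :
    ∫ t in (0:ℝ)..T, (a t ⬝ᵥ q t + p t ⬝ᵥ b t) = a T ⬝ᵥ b T - a 0 ⬝ᵥ b 0 := by
  have hac := contOn_of_rep hT hp ha
  have hbc := contOn_of_rep hT hq hb
  have hai : ∀ (i : Fin n), ∀ t ∈ Icc (0:ℝ) T,
      a t i = a 0 i + ∫ s in (0:ℝ)..t, p s i := by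
    intro i t ht
    have h1 := congrFun (ha t ht) i
    have hsub : uIcc (0:ℝ) t ⊆ uIcc 0 T :=
      uIcc_subset_uIcc left_mem_uIcc (by rw [uIcc_of_le hT]; exact ht)
    rw [h1, Pi.add_apply, pi_intervalIntegral_apply (hp.mono_set hsub) i]
  have hbi : ∀ (i : Fin n), ∀ t ∈ Icc (0:ℝ) T,
      b t i = b 0 i + ∫ s in (0:ℝ)..t, q s i := by
    intro i t ht
    have h1 := congrFun (hb t ht) i
    have hsub : uIcc (0:ℝ) t ⊆ uIcc 0 T :=
      uIcc_subset_uIcc left_mem_uIcc (by rw [uIcc_of_le hT]; exact ht)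
    rw [h1, Pi.add_apply, pi_intervalIntegral_apply (hq.mono_set hsub) i]
  have hint : ∀ i : Fin n, IntervalIntegrable
      (fun t => a t i * q t i + p t i * b t i) volume 0 T := by
    intro i
    have h1 : ContinuousOn (fun t => a t i) (uIcc 0 T) := by
      rw [uIcc_of_le hT]; exact (continuous_apply i).comp_continuousOn hac
    have h2 : ContinuousOn (fun t => b t i) (uIcc 0 T) := by
      rw [uIcc_of_le hT]; exact (continuous_apply i).comp_continuousOn hbc
    exact ((pi_II_apply hq i).continuousOn_mul h1).add
      ((pi_II_apply hp i).mul_continuousOn h2)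
  have hsplit : (fun t => a t ⬝ᵥ q t + p t ⬝ᵥ b t)
      = fun t => ∑ i : Fin n, (a t i * q t i + p t i * b t i) := by
    ext t; simp [dotProduct, Finset.sum_add_distrib]
  rw [hsplit]
  rw [intervalIntegral.integral_finset_sum (fun (i : Fin n) (_ : i ∈ Finset.univ) => hint i)]
  have : ∀ i : Fin n, ∫ t in (0:ℝ)..T, (a t i * q t i + p t i * b t i)
      = a T i * b T i - a 0 i * b 0 i := by
    intro i
    exact parts_scalar T hT _ _ _ _ (pi_II_apply hp i) (pi_II_apply hq i) (hai i) (hbi i)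
  rw [Finset.sum_congr rfl (fun i _ => this i)]
  simp [dotProduct, Finset.sum_sub_distrib]

lemma chain {n : ℕ} {T : ℝ} (hT : 0 ≤ T) (Q : ℕ) (x v : ℝ → Fin n → ℝ)
    (hdiff : ∀ j < Q, Differentiable ℝ (iteratedDeriv j x))
    (hv : IntervalIntegrable v volume 0 T)
    (hrep : ∀ t ∈ Icc (0:ℝ) T, iteratedDeriv Q x t = iteratedDeriv Q x 0
      + ∫ s in (0:ℝ)..t, v s) :
    ∀ j ≤ Q, ContinuousOn (iteratedDeriv j x) (Icc 0 T)
      ∧ IntervalIntegrable (if j = Q then v else iteratedDeriv (j+1) x) volume 0 T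
      ∧ (∀ t ∈ Icc (0:ℝ) T, iteratedDeriv j x t = iteratedDeriv j x 0
          + ∫ s in (0:ℝ)..t, (if j = Q then v else iteratedDeriv (j+1) x) s) := by
  have hcont : ∀ j ≤ Q, ContinuousOn (iteratedDeriv j x) (Icc 0 T) := by
    intro j hj
    rcases eq_or_lt_of_le hj with h | h
    · subst h; exact contOn_of_rep hT hv hrep
    · exact ((hdiff j h).continuous).continuousOn
  have hII : ∀ j ≤ Q,
      IntervalIntegrable (if j = Q then v else iteratedDeriv (j+1) x) volume 0 T := by
    intro j hj
    by_cases h : j = Q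
    · simpa [h] using hv
    · have hj' : j + 1 ≤ Q := by omega
      rw [if_neg h]
      have hc := hcont (j+1) hj'
      exact ContinuousOn.intervalIntegrable (by rw [uIcc_of_le hT]; exact hc)
  intro j hj
  refine ⟨hcont j hj, hII j hj, ?_⟩
  by_cases h : j = Q
  · subst h; simpa using hrep
  · rw [if_neg h]
    have hjQ : j < Q := lt_of_le_of_ne hj h
    intro t ht
    have hsub : uIcc (0:ℝ) t ⊆ uIcc 0 T :=
      uIcc_subset_uIcc left_mem_uIcc (by rw [uIcc_of_le hT]; exact ht)
    have hint : IntervalIntegrable (iteratedDeriv (j+1) x) volume 0 t := by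
      have h2 := hII j hj; rw [if_neg h] at h2; exact h2.mono_set hsub
    have hd : ∀ s ∈ uIcc (0:ℝ) t, HasDerivAt (iteratedDeriv j x) (iteratedDeriv (j+1) x s) s := by
      intro s _
      rw [iteratedDeriv_succ]
      exact ((hdiff j hjQ) s).hasDerivAt
    rw [intervalIntegral.integral_eq_sub_of_hasDerivAt hd hint]
    abel

/-- Inequality (15): weak duality between problem (PHC) and its dual (PHC*). -/
theorem weak_duality_PHC
    (n k : ℕ) (hn : 1 ≤ n) (hk : 1 ≤ k) (T : ℝ) (hT : 0 < T)
    (F : (Fin n → ℝ) → ℝ → Set (Fin n → ℝ))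
    (S : Set ((Fin n → ℝ) × (Fin n → ℝ)))
    (X : ℝ → Set (Fin n → ℝ))
    (f : (Fin n → ℝ) → (Fin n → ℝ) → ℝ)
    (x v : ℝ → (Fin n → ℝ))
    (hfeas : IsFeasible n k T F S X x v)
    (xs w : ℝ → (Fin n → ℝ))
    (hadj : IsAdjointArc n k T xs w)
    (vs : ℝ → (Fin n → ℝ))
    (μ₀ μ₁ : Fin n → ℝ)
    (m ω : ℝ → ℝ)
    (hm : IntervalIntegrable m volume 0 T)
    (hω : IntervalIntegrable ω volume 0 T)
    (cf cS : ℝ) (cSj : ℕ → ℝ)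
    -- (i): m(t) minorizes M_F((−1)^k x*⁽ᵏ⁾(t) − v*(t), x*(t))
    (hi : ∀ᵐ t ∂volume, t ∈ Icc (0:ℝ) T → ∀ ξ η, η ∈ F ξ t →
      m t ≤ ξ ⬝ᵥ ((-1:ℝ)^k • w t - vs t) - η ⬝ᵥ xs t)
    -- (ii): ω(t) majorizes the support function W_{X(t)}(−v*(t))
    (hii : ∀ᵐ t ∂volume, t ∈ Icc (0:ℝ) T → ∀ ξ ∈ X t, ξ ⬝ᵥ (-vs t) ≤ ω t)
    -- (iii): c_f majorizes the conjugate value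
    (hiii : ∀ y₀ y₁ : Fin n → ℝ,
      y₀ ⬝ᵥ ((-1:ℝ)^(k-1) • iteratedDeriv (k-1) xs 0 + μ₀)
        + y₁ ⬝ᵥ (μ₁ + (-1:ℝ)^k • iteratedDeriv (k-1) xs T) - f y₀ y₁ ≤ cf)
    -- (iv): c_S majorizes W_S(−μ₀*, −μ₁*)
    (hiv : ∀ s ∈ S, -(s.1 ⬝ᵥ μ₀) - s.2 ⬝ᵥ μ₁ ≤ cS)
    -- (v): c_S^j majorizes W_S((−1)^j x*⁽ʲ⁾(0), (−1)^{j+1} x*⁽ʲ⁾(T))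
    (hv : ∀ j < k - 1, ∀ s ∈ S,
      s.1 ⬝ᵥ ((-1:ℝ)^j • iteratedDeriv j xs 0)
        + s.2 ⬝ᵥ ((-1:ℝ)^(j+1) • iteratedDeriv j xs T) ≤ cSj j) :
    -cf + (∫ t in (0:ℝ)..T, m t) - (∫ t in (0:ℝ)..T, ω t) - cS
      - ∑ j ∈ Finset.range (k-1), cSj j ≤ f (x 0) (x T) := by
  have hT' : 0 ≤ T := hT.le
  obtain ⟨hxdiff, hvII, hxrep, hvF, hS, hXmem⟩ := hfeas
  obtain ⟨hsdiff, hwII, hsrep⟩ := hadj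
  set Q : ℕ := k - 1 with hQdef
  have hkQ : k = Q + 1 := by omega
  have hpow : (-1:ℝ)^k = -(-1:ℝ)^Q := by rw [hkQ, pow_succ]; ring
  have hx := chain hT' Q x v hxdiff hvII hxrep
  have hy := chain hT' Q xs w hsdiff hwII hsrep
  have hXc : ∀ j ≤ Q, ContinuousOn (iteratedDeriv j x) (Icc 0 T) := fun j hj => (hx j hj).1
  have hYc : ∀ j ≤ Q, ContinuousOn (iteratedDeriv j xs) (Icc 0 T) := fun j hj => (hy j hj).1
  have hDX : ∀ j ≤ Q, IntervalIntegrable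
      (if j = Q then v else iteratedDeriv (j+1) x) volume 0 T := fun j hj => (hx j hj).2.1
  have hDY : ∀ j ≤ Q, IntervalIntegrable
      (if j = Q then w else iteratedDeriv (j+1) xs) volume 0 T := fun j hj => (hy j hj).2.1
  have hxc : ContinuousOn x (Icc 0 T) := by
    have := hXc 0 (Nat.zero_le _); rwa [iteratedDeriv_zero] at this
  have hsc : ContinuousOn xs (Icc 0 T) := by
    have := hYc 0 (Nat.zero_le _); rwa [iteratedDeriv_zero] at this
  -- integration by parts for each pair of levels
  have hparts : ∀ j ≤ Q,
      ∫ t in (0:ℝ)..T, (iteratedDeriv j x t ⬝ᵥ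
          (if Q - j = Q then w else iteratedDeriv (Q-j+1) xs) t
        + (if j = Q then v else iteratedDeriv (j+1) x) t ⬝ᵥ iteratedDeriv (Q-j) xs t)
      = iteratedDeriv j x T ⬝ᵥ iteratedDeriv (Q-j) xs T
        - iteratedDeriv j x 0 ⬝ᵥ iteratedDeriv (Q-j) xs 0 := by
    intro j hj
    exact parts_dot hT' _ _ _ _ (hDX j hj) (hDY (Q-j) (by omega)) (hx j hj).2.2
      (hy (Q-j) (by omega)).2.2
  have hII : ∀ j ≤ Q, IntervalIntegrable (fun t =>
      iteratedDeriv j x t ⬝ᵥ (if Q - j = Q then w else iteratedDeriv (Q-j+1) xs) t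
        + (if j = Q then v else iteratedDeriv (j+1) x) t ⬝ᵥ iteratedDeriv (Q-j) xs t)
      volume 0 T := by
    intro j hj
    exact (II_dot hT' (hXc j hj) (hDY (Q-j) (by omega))).add
      (II_dot' hT' (hYc (Q-j) (by omega)) (hDX j hj))
  -- telescoping identity (pointwise)
  have htel : ∀ t : ℝ, (∑ j ∈ Finset.range (Q+1), (-1:ℝ)^(Q-j) *
      (iteratedDeriv j x t ⬝ᵥ (if Q - j = Q then w else iteratedDeriv (Q-j+1) xs) t
        + (if j = Q then v else iteratedDeriv (j+1) x) t ⬝ᵥ iteratedDeriv (Q-j) xs t))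
      = (-1:ℝ)^Q * (x t ⬝ᵥ w t) + v t ⬝ᵥ xs t := by
    intro t
    have h1 : (∑ j ∈ Finset.range (Q+1), (-1:ℝ)^(Q-j) *
        (iteratedDeriv j x t ⬝ᵥ (if Q - j = Q then w else iteratedDeriv (Q-j+1) xs) t
          + (if j = Q then v else iteratedDeriv (j+1) x) t ⬝ᵥ iteratedDeriv (Q-j) xs t))
        = (∑ j ∈ Finset.range (Q+1), (-1:ℝ)^(Q-j) *
            (iteratedDeriv j x t ⬝ᵥ (if Q - j = Q then w else iteratedDeriv (Q-j+1) xs) t))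
          + ∑ j ∈ Finset.range (Q+1), (-1:ℝ)^(Q-j) *
            ((if j = Q then v else iteratedDeriv (j+1) x) t ⬝ᵥ iteratedDeriv (Q-j) xs t) := by
      rw [← Finset.sum_add_distrib]
      exact Finset.sum_congr rfl (fun j _ => by ring)
    rw [h1]
    have h2 : (∑ j ∈ Finset.range (Q+1), (-1:ℝ)^(Q-j) *
        ((if j = Q then v else iteratedDeriv (j+1) x) t ⬝ᵥ iteratedDeriv (Q-j) xs t))
        = (∑ j ∈ Finset.range Q, (-1:ℝ)^(Q-j) *
            (iteratedDeriv (j+1) x t ⬝ᵥ iteratedDeriv (Q-j) xs t)) + v t ⬝ᵥ xs t := by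
      rw [Finset.sum_range_succ]
      congr 1
      · exact Finset.sum_congr rfl (fun j hj => by
          rw [if_neg (by have := Finset.mem_range.mp hj; omega)])
      · simp
    rw [h2]
    have h3 : (∑ j ∈ Finset.range Q, (-1:ℝ)^(Q-j) *
        (iteratedDeriv (j+1) x t ⬝ᵥ iteratedDeriv (Q-j) xs t))
        = -∑ j ∈ Finset.range Q, (-1:ℝ)^(Q-(j+1)) *
            (iteratedDeriv (j+1) x t ⬝ᵥ
              (if Q - (j+1) = Q then w else iteratedDeriv (Q-(j+1)+1) xs) t) := by
      rw [← Finset.sum_neg_distrib]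
      refine Finset.sum_congr rfl (fun j hj => ?_)
      have hjQ : j < Q := Finset.mem_range.mp hj
      have e1 : Q - j = (Q - (j+1)) + 1 := by omega
      have e2 : Q - (j+1) ≠ Q := by omega
      have e3 : Q - (j+1) + 1 = Q - j := by omega
      rw [if_neg e2, e3, e1, pow_succ]
      ring
    rw [h3]
    have h4 := Finset.sum_range_succ' (fun j => (-1:ℝ)^(Q-j) *
        (iteratedDeriv j x t ⬝ᵥ (if Q - j = Q then w else iteratedDeriv (Q-j+1) xs) t)) Q
    rw [h4]
    have h5 : (-1:ℝ)^(Q-0) *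
        (iteratedDeriv 0 x t ⬝ᵥ (if Q - 0 = Q then w else iteratedDeriv (Q-0+1) xs) t)
        = (-1:ℝ)^Q * (x t ⬝ᵥ w t) := by
      simp [iteratedDeriv_zero]
    rw [h5]
    ring
  -- the integral identity
  have hIeq : ∫ t in (0:ℝ)..T, ((-1:ℝ)^Q * (x t ⬝ᵥ w t) + v t ⬝ᵥ xs t)
      = ∑ j ∈ Finset.range (Q+1), (-1:ℝ)^(Q-j) *
          (iteratedDeriv j x T ⬝ᵥ iteratedDeriv (Q-j) xs T
            - iteratedDeriv j x 0 ⬝ᵥ iteratedDeriv (Q-j) xs 0) := by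
    have e1 : ∀ j ∈ Finset.range (Q+1), (-1:ℝ)^(Q-j) *
        (iteratedDeriv j x T ⬝ᵥ iteratedDeriv (Q-j) xs T
          - iteratedDeriv j x 0 ⬝ᵥ iteratedDeriv (Q-j) xs 0)
        = ∫ t in (0:ℝ)..T, ((-1:ℝ)^(Q-j) *
            (iteratedDeriv j x t ⬝ᵥ (if Q - j = Q then w else iteratedDeriv (Q-j+1) xs) t
              + (if j = Q then v else iteratedDeriv (j+1) x) t ⬝ᵥ iteratedDeriv (Q-j) xs t)) := by
      intro j hj
      have hj' : j ≤ Q := by have := Finset.mem_range.mp hj; omega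
      rw [intervalIntegral.integral_const_mul, hparts j hj']
    rw [Finset.sum_congr rfl e1]
    rw [← intervalIntegral.integral_finset_sum (fun j hj => ((hII j
      (by have := Finset.mem_range.mp hj; omega)).const_mul _))]
    exact intervalIntegral.integral_congr (fun t _ => (htel t)) |>.symm ▸ rfl
  -- boundary estimate
  have hbd : -(∑ j ∈ Finset.range (Q+1), (-1:ℝ)^(Q-j) *
      (iteratedDeriv j x T ⬝ᵥ iteratedDeriv (Q-j) xs T
        - iteratedDeriv j x 0 ⬝ᵥ iteratedDeriv (Q-j) xs 0))
      ≤ cf + cS + f (x 0) (x T) + ∑ i ∈ Finset.range Q, cSj i := by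
    have hneg : -(∑ j ∈ Finset.range (Q+1), (-1:ℝ)^(Q-j) *
        (iteratedDeriv j x T ⬝ᵥ iteratedDeriv (Q-j) xs T
          - iteratedDeriv j x 0 ⬝ᵥ iteratedDeriv (Q-j) xs 0))
        = ∑ j ∈ Finset.range (Q+1), (-1:ℝ)^(Q-j) *
            (iteratedDeriv j x 0 ⬝ᵥ iteratedDeriv (Q-j) xs 0
              - iteratedDeriv j x T ⬝ᵥ iteratedDeriv (Q-j) xs T) := by
      rw [← Finset.sum_neg_distrib]
      exact Finset.sum_congr rfl (fun j _ => by ring)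
    rw [hneg, Finset.sum_range_succ' (fun j => (-1:ℝ)^(Q-j) *
        (iteratedDeriv j x 0 ⬝ᵥ iteratedDeriv (Q-j) xs 0
          - iteratedDeriv j x T ⬝ᵥ iteratedDeriv (Q-j) xs T)) Q]
    have hg0 : (-1:ℝ)^(Q-0) *
        (iteratedDeriv 0 x 0 ⬝ᵥ iteratedDeriv (Q-0) xs 0
          - iteratedDeriv 0 x T ⬝ᵥ iteratedDeriv (Q-0) xs T)
        ≤ cf + cS + f (x 0) (x T) := by
      have h3 := hiii (x 0) (x T)
      have h4 := hiv _ (hS 0 (by omega))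
      rw [dotProduct_add, dotProduct_add, dotProduct_smul, dotProduct_smul,
        smul_eq_mul, smul_eq_mul, hpow] at h3
      simp only [iteratedDeriv_zero, Nat.sub_zero] at *
      linarith
    have hgj : ∀ j ∈ Finset.range Q, (-1:ℝ)^(Q-(j+1)) *
        (iteratedDeriv (j+1) x 0 ⬝ᵥ iteratedDeriv (Q-(j+1)) xs 0
          - iteratedDeriv (j+1) x T ⬝ᵥ iteratedDeriv (Q-(j+1)) xs T)
        ≤ cSj (Q-1-j) := by
      intro j hj
      have hjQ : j < Q := Finset.mem_range.mp hj
      have hmem := hS (Q - (Q-1-j)) (by omega)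
      have h5 := hv (Q-1-j) (by omega) _ hmem
      have e1 : Q - (Q-1-j) = j + 1 := by omega
      have e2 : Q - (j+1) = Q-1-j := by omega
      rw [e1] at h5
      rw [e2]
      rw [dotProduct_smul, dotProduct_smul, smul_eq_mul, smul_eq_mul, pow_succ] at h5
      simp only at h5 ⊢
      nlinarith [h5]
    calc (∑ j ∈ Finset.range Q, (-1:ℝ)^(Q-(j+1)) *
            (iteratedDeriv (j+1) x 0 ⬝ᵥ iteratedDeriv (Q-(j+1)) xs 0
              - iteratedDeriv (j+1) x T ⬝ᵥ iteratedDeriv (Q-(j+1)) xs T))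
          + (-1:ℝ)^(Q-0) *
            (iteratedDeriv 0 x 0 ⬝ᵥ iteratedDeriv (Q-0) xs 0
              - iteratedDeriv 0 x T ⬝ᵥ iteratedDeriv (Q-0) xs T)
        ≤ (∑ j ∈ Finset.range Q, cSj (Q-1-j)) + (cf + cS + f (x 0) (x T)) :=
          add_le_add (Finset.sum_le_sum hgj) hg0
      _ = cf + cS + f (x 0) (x T) + ∑ i ∈ Finset.range Q, cSj i := by
          rw [Finset.sum_range_reflect]
          ring
  -- integrability of the comparison function
  have hbase : IntervalIntegrable
      (fun t => (-1:ℝ)^Q * (x t ⬝ᵥ w t) + v t ⬝ᵥ xs t) volume 0 T :=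
    ((II_dot hT' hxc hwII).const_mul ((-1:ℝ)^Q)).add (II_dot' hT' hsc hvII)
  have hIntg : IntervalIntegrable
      (fun t => -((-1:ℝ)^Q * (x t ⬝ᵥ w t) + v t ⬝ᵥ xs t) + ω t) volume 0 T :=
    hbase.neg.add hω
  -- a.e. comparison
  have hae : (fun t => m t) ≤ᵐ[volume.restrict (Icc (0:ℝ) T)]
      fun t => -((-1:ℝ)^Q * (x t ⬝ᵥ w t) + v t ⬝ᵥ xs t) + ω t := by
    rw [Filter.EventuallyLE, ae_restrict_iff' measurableSet_Icc]
    filter_upwards [hi, hii, hvF] with t h1 h2 h3 ht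
    have e1 := h1 ht (x t) (v t) (h3 ht)
    have e2 := h2 ht (x t) (hXmem t ht)
    rw [dotProduct_sub, dotProduct_smul, smul_eq_mul, hpow] at e1
    rw [dotProduct_neg] at e2
    linarith
  have hmono := intervalIntegral.integral_mono_ae_restrict hT' hm hIntg hae
  have hrw : (fun t => -((-1:ℝ)^Q * (x t ⬝ᵥ w t) + v t ⬝ᵥ xs t) + ω t)
      = fun t => ω t - ((-1:ℝ)^Q * (x t ⬝ᵥ w t) + v t ⬝ᵥ xs t) := by
    funext t; ring
  rw [hrw, intervalIntegral.integral_sub hω hbase, hIeq] at hmono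
  linarith [hbd, hmono]
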